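/- Let n ≥ 1 and let X ⊆ ℝⁿ be a polytope with exactly 2 vertices (extreme points). Then there exists a finite set D ⊆ ℝⁿ of directions with |D| ≤ 3n - 1 such that D determines X within the class of all polytopes in ℝⁿ having at most 2 extreme points. (Convergence of Algorithm 2 in the case n_v = 2 with known bound n̄ = 2: it terminates after at most 3n - 1 oracle calls with X_v = {a, b}.) -/

import Mathlib

open RealInnerProductSpace

/-- Support function of a subset of `ℝⁿ`. -/
noncomputable def supp {n : ℕ} (X : Set (EuclideanSpace ℝ (Fin n)))
    (d : EuclideanSpace ℝ (Fin n)) : ℝ :=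
  sSup ((fun v => ⟪v, d⟫) '' X)

/-- `X` is a polytope: the convex hull of a nonempty finite set. -/
def IsPolytope {n : ℕ} (X : Set (EuclideanSpace ℝ (Fin n))) : Prop :=
  ∃ F : Finset (EuclideanSpace ℝ (Fin n)), F.Nonempty ∧ X = convexHull ℝ (F : Set _)

/-- The finite direction set `D` determines `X` within the class `𝒞`. -/
def Determines {n : ℕ} (𝒞 : Set (Set (EuclideanSpace ℝ (Fin n))))
    (D : Finset (EuclideanSpace ℝ (Fin n))) (X : Set (EuclideanSpace ℝ (Fin n))) : Prop :=
  ∀ Y ∈ 𝒞, (∀ d ∈ D, supp Y d = supp X d) → Y = X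

lemma max_add_min' (x y : ℝ) : max x y + min x y = x + y := by
  rcases le_total x y with h | h
  · rw [max_eq_right h, min_eq_left h, add_comm]
  · rw [max_eq_left h, min_eq_right h]

/-- Support function of a segment. -/
lemma supp_segment {n : ℕ} (a b d : EuclideanSpace ℝ (Fin n)) :
    supp (segment ℝ a b) d = max ⟪a, d⟫ ⟪b, d⟫ := by
  apply IsGreatest.csSup_eq
  constructor
  · rcases le_total ⟪a, d⟫ ⟪b, d⟫ with h | h
    · rw [max_eq_right h]; exact ⟨b, right_mem_segment ℝ a b, rfl⟩
    · rw [max_eq_left h]; exact ⟨a, left_mem_segment ℝ a b, rfl⟩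
  · rintro x ⟨v, ⟨u, w, hu, hw, huw, rfl⟩, rfl⟩
    simp only [inner_add_left, real_inner_smul_left]
    have h1 : ⟪a, d⟫ ≤ max ⟪a, d⟫ ⟪b, d⟫ := le_max_left _ _
    have h2 : ⟪b, d⟫ ≤ max ⟪a, d⟫ ⟪b, d⟫ := le_max_right _ _
    calc u * ⟪a, d⟫ + w * ⟪b, d⟫
        ≤ u * max ⟪a, d⟫ ⟪b, d⟫ + w * max ⟪a, d⟫ ⟪b, d⟫ :=
          add_le_add (mul_le_mul_of_nonneg_left h1 hu) (mul_le_mul_of_nonneg_left h2 hw)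
      _ = max ⟪a, d⟫ ⟪b, d⟫ := by rw [← add_mul, huw, one_mul]

set_option maxHeartbeats 1000000 in
/-- A polytope is the convex hull of its extreme points. -/
lemma polytope_eq_hull_extremePoints {n : ℕ} {X : Set (EuclideanSpace ℝ (Fin n))}
    (hX : IsPolytope X) : X = convexHull ℝ (Set.extremePoints ℝ X) := by
  obtain ⟨F, hF, rfl⟩ := hX
  have hfin : (Set.extremePoints ℝ (convexHull ℝ (F : Set _))).Finite :=
    F.finite_toSet.subset extremePoints_convexHull_subset
  have hclosed : IsClosed (convexHull ℝ (Set.extremePoints ℝ (convexHull ℝ (F : Set (EuclideanSpace ℝ (Fin n)))))) :=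
    (hfin.isCompact_convexHull ℝ).isClosed
  have := closure_convexHull_extremePoints (F.finite_toSet.isCompact_convexHull ℝ)
    (convex_convexHull ℝ _)
  rw [hclosed.closure_eq] at this
  exact this.symm

lemma extremePoints_finite {n : ℕ} {X : Set (EuclideanSpace ℝ (Fin n))}
    (hX : IsPolytope X) : (Set.extremePoints ℝ X).Finite := by
  obtain ⟨F, hF, rfl⟩ := hX
  exact F.finite_toSet.subset extremePoints_convexHull_subset

/-- Core combinatorial lemma. -/
lemma core {n : ℕ} (a b c e : EuclideanSpace ℝ (Fin n)) (k : Fin n) (t : ℝ) (ht : 0 < t)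
    (hk : b k < a k)
    (htB : ∀ i, t * |a i - b i| < a k - b k)
    (hmax : ∀ i, max (c i) (e i) = max (a i) (b i))
    (hmin : ∀ i, min (c i) (e i) = min (a i) (b i))
    (hck : c k = a k)
    (hf : ∀ i, i ≠ k → max (c k + t * c i) (e k + t * e i) = a k + t * a i) :
    c = a ∧ e = b := by
  have hsum : ∀ i, c i + e i = a i + b i := by
    intro i
    have := max_add_min' (c i) (e i)
    rw [hmax i, hmin i, max_add_min' (a i) (b i)] at this
    linarith
  have hek : e k = b k := by have := hsum k; linarith
  -- bounds on c i, e i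
  have hbound : ∀ i, |e i - c i| ≤ |a i - b i| := by
    intro i
    have h1 : c i ≤ max (a i) (b i) := (hmax i) ▸ le_max_left _ _
    have h2 : e i ≤ max (a i) (b i) := (hmax i) ▸ le_max_right _ _
    have h3 : min (a i) (b i) ≤ c i := (hmin i) ▸ min_le_left _ _
    have h4 : min (a i) (b i) ≤ e i := (hmin i) ▸ min_le_right _ _
    rw [abs_sub_le_iff]
    constructor
    · have : max (a i) (b i) - min (a i) (b i) ≤ |a i - b i| := by
        rcases le_total (a i) (b i) with h | h
        · rw [max_eq_right h, min_eq_left h, abs_sub_comm]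
          exact le_abs_self _
        · rw [max_eq_left h, min_eq_right h]
          exact le_abs_self _
      linarith
    · have : max (a i) (b i) - min (a i) (b i) ≤ |a i - b i| := by
        rcases le_total (a i) (b i) with h | h
        · rw [max_eq_right h, min_eq_left h, abs_sub_comm]
          exact le_abs_self _
        · rw [max_eq_left h, min_eq_right h]
          exact le_abs_self _
      linarith
  have hci : ∀ i, c i = a i := by
    intro i
    rcases eq_or_ne i k with rfl | hik
    · exact hck
    · have hfi := hf i hik
      have hlt : e k + t * e i < c k + t * c i := by
        have h1 : t * (e i - c i) ≤ t * |e i - c i| :=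
          mul_le_mul_of_nonneg_left (le_abs_self _) ht.le
        have h2 : t * |e i - c i| ≤ t * |a i - b i| :=
          mul_le_mul_of_nonneg_left (hbound i) ht.le
        have h3 := htB i
        rw [hck, hek]
        nlinarith
      rw [max_eq_left hlt.le, hck] at hfi
      have : t * c i = t * a i := by linarith
      exact mul_left_cancel₀ ht.ne' this
  refine ⟨WithLp.ofLp_injective 2 (funext hci), WithLp.ofLp_injective 2 (funext fun i => ?_)⟩
  have := hsum i
  have := hci i
  linarith

lemma aux_determines {n : ℕ} (a b : EuclideanSpace ℝ (Fin n)) (k : Fin n) (hk : b k < a k) :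
    ∃ D : Finset (EuclideanSpace ℝ (Fin n)), D.card ≤ 3 * n - 1 ∧
      ∀ c e : EuclideanSpace ℝ (Fin n),
        (∀ d ∈ D, max ⟪c, d⟫ ⟪e, d⟫ = max ⟪a, d⟫ ⟪b, d⟫) →
        segment ℝ c e = segment ℝ a b := by
  classical
  have hne : (Finset.univ : Finset (Fin n)).Nonempty := ⟨k, Finset.mem_univ k⟩
  set B : ℝ := Finset.univ.sup' hne (fun i => |a i - b i|) with hB
  have hBge : ∀ i, |a i - b i| ≤ B := fun i => by
    rw [hB]; exact Finset.le_sup' (fun j => |a j - b j|) (Finset.mem_univ i)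
  have hBnn : 0 ≤ B := le_trans (abs_nonneg _) (hBge k)
  set t : ℝ := (a k - b k) / (B + 1) with htdef
  have ht : 0 < t := div_pos (by linarith) (by linarith)
  have htB : ∀ i, t * |a i - b i| < a k - b k := by
    intro i
    have h1 : t * |a i - b i| ≤ t * B := mul_le_mul_of_nonneg_left (hBge i) ht.le
    have h2 : t * B < t * (B + 1) := by nlinarith
    have h3 : t * (B + 1) = a k - b k := by
      rw [htdef]; exact div_mul_cancel₀ _ (by linarith : B + (1:ℝ) ≠ 0)
    linarith
  set D : Finset (EuclideanSpace ℝ (Fin n)) :=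
    ((Finset.univ.image fun i : Fin n => EuclideanSpace.single i (1 : ℝ)) ∪
      (Finset.univ.image fun i : Fin n => EuclideanSpace.single i (-1 : ℝ))) ∪
      ((Finset.univ.erase k).image fun i : Fin n =>
        EuclideanSpace.single k (1 : ℝ) + EuclideanSpace.single i t) with hD
  refine ⟨D, ?_, ?_⟩
  · rw [hD]
    have h1 := Finset.card_union_le
      ((Finset.univ.image fun i : Fin n => EuclideanSpace.single i (1 : ℝ)) ∪
        (Finset.univ.image fun i : Fin n => EuclideanSpace.single i (-1 : ℝ)))
      ((Finset.univ.erase k).image fun i : Fin n =>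
        EuclideanSpace.single k (1 : ℝ) + EuclideanSpace.single i t)
    have h2 := Finset.card_union_le
      (Finset.univ.image fun i : Fin n => EuclideanSpace.single i (1 : ℝ))
      (Finset.univ.image fun i : Fin n => EuclideanSpace.single i (-1 : ℝ))
    have h3 : (Finset.univ.image fun i : Fin n => EuclideanSpace.single i (1 : ℝ)).card ≤ n := by
      refine le_trans Finset.card_image_le ?_
      simp
    have h4 : (Finset.univ.image fun i : Fin n => EuclideanSpace.single i (-1 : ℝ)).card ≤ n := by
      refine le_trans Finset.card_image_le ?_
      simp
    have h5 : ((Finset.univ.erase k).image fun i : Fin n =>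
        EuclideanSpace.single k (1 : ℝ) + EuclideanSpace.single i t).card ≤ n - 1 := by
      refine le_trans Finset.card_image_le ?_
      rw [Finset.card_erase_of_mem (Finset.mem_univ k)]
      simp
    have hn1 : 1 ≤ n := Nat.one_le_iff_ne_zero.mpr (by rintro rfl; exact k.elim0)
    omega
  · intro c e hsupp
    -- extract the coordinate equalities
    have hmax : ∀ i, max (c i) (e i) = max (a i) (b i) := by
      intro i
      have hd : EuclideanSpace.single i (1 : ℝ) ∈ D := by
        rw [hD]
        exact Finset.mem_union_left _ (Finset.mem_union_left _
          (Finset.mem_image_of_mem _ (Finset.mem_univ i)))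
      have := hsupp _ hd
      simpa [EuclideanSpace.inner_single_right] using this
    have hmin : ∀ i, min (c i) (e i) = min (a i) (b i) := by
      intro i
      have hd : EuclideanSpace.single i (-1 : ℝ) ∈ D := by
        rw [hD]
        exact Finset.mem_union_left _ (Finset.mem_union_right _
          (Finset.mem_image_of_mem _ (Finset.mem_univ i)))
      have h := hsupp _ hd
      simp only [EuclideanSpace.inner_single_right] at h
      have h' : max (-c i) (-e i) = max (-a i) (-b i) := by
        simpa [starRingEnd_apply, mul_comm] using h
      rw [max_neg_neg, max_neg_neg, neg_inj] at h'
      exact h'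
    have hf : ∀ i, i ≠ k →
        max (c k + t * c i) (e k + t * e i) = max (a k + t * a i) (b k + t * b i) := by
      intro i hik
      have hd : EuclideanSpace.single k (1 : ℝ) + EuclideanSpace.single i t ∈ D := by
        rw [hD]
        exact Finset.mem_union_right _
          (Finset.mem_image_of_mem _ (Finset.mem_erase.mpr ⟨hik, Finset.mem_univ i⟩))
      have h := hsupp _ hd
      simpa [inner_add_right, EuclideanSpace.inner_single_right, mul_comm] using h
    -- simplify RHS of hf
    have hfR : ∀ i, i ≠ k → max (c k + t * c i) (e k + t * e i) = a k + t * a i := by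
      intro i hik
      rw [hf i hik, max_eq_left]
      have h1 : t * (b i - a i) ≤ t * |a i - b i| := by
        have : b i - a i ≤ |a i - b i| := by
          rw [abs_sub_comm]; exact le_abs_self _
        exact mul_le_mul_of_nonneg_left this ht.le
      have := htB i
      linarith
    -- which of c, e has max k-th coordinate?
    have hmk : max (c k) (e k) = a k := by rw [hmax k, max_eq_left hk.le]
    rcases max_choice (c k) (e k) with hck | hek
    · obtain ⟨rfl, rfl⟩ := core a b c e k t ht hk htB hmax hmin (hck ▸ hmk) hfR
      rfl
    · have hmax' : ∀ i, max (e i) (c i) = max (a i) (b i) := fun i => (max_comm _ _).trans (hmax i)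
      have hmin' : ∀ i, min (e i) (c i) = min (a i) (b i) := fun i => (min_comm _ _).trans (hmin i)
      have hfR' : ∀ i, i ≠ k →
          max (e k + t * e i) (c k + t * c i) = a k + t * a i :=
        fun i hik => (max_comm _ _).trans (hfR i hik)
      obtain ⟨rfl, rfl⟩ := core a b e c k t ht hk htB hmax' hmin' (hek ▸ hmk) hfR'
      exact segment_symm ℝ _ _

/-- a polytope `X ⊆ ℝⁿ` (`n ≥ 1`) with exactly `2` vertices is
determined by at most `3n - 1` directions within the class of polytopes in `ℝⁿ`
with at most `2` extreme points. -/
theorem stmt_10 (n : ℕ) (hn : 1 ≤ n) (X : Set (EuclideanSpace ℝ (Fin n)))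
    (hX : IsPolytope X) (hcard : (Set.extremePoints ℝ X).ncard = 2) :
    ∃ D : Finset (EuclideanSpace ℝ (Fin n)), D.card ≤ 3 * n - 1 ∧
      Determines {Y | IsPolytope Y ∧ (Set.extremePoints ℝ Y).ncard ≤ 2} D X := by
  classical
  obtain ⟨a, b, hab, hext⟩ := Set.ncard_eq_two.mp hcard
  have hXseg : X = segment ℝ a b := by
    rw [polytope_eq_hull_extremePoints hX, hext, convexHull_pair]
  -- find a coordinate where a, b differ, wlog a k > b k
  have hex : ∃ k, a k ≠ b k := by
    by_contra h
    push_neg at h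
    exact hab (WithLp.ofLp_injective 2 (funext h))
  obtain ⟨k, hk⟩ := hex
  -- choose labels a', b' with b' k < a' k
  obtain ⟨a', b', hk', hseg⟩ : ∃ a' b' : EuclideanSpace ℝ (Fin n),
      b' k < a' k ∧ segment ℝ a b = segment ℝ a' b' := by
    rcases lt_or_gt_of_ne hk with h | h
    · exact ⟨b, a, h, segment_symm ℝ a b⟩
    · exact ⟨a, b, h, rfl⟩
  obtain ⟨D, hcardD, hdet⟩ := aux_determines a' b' k hk'
  refine ⟨D, hcardD, ?_⟩
  intro Y hY hsupp
  obtain ⟨hYpoly, hY2⟩ := hY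
  -- Y is a segment (possibly degenerate)
  have hYfin := extremePoints_finite hYpoly
  have hYeq := polytope_eq_hull_extremePoints hYpoly
  have hYne : Y.Nonempty := by
    obtain ⟨F, hF, rfl⟩ := hYpoly
    rw [convexHull_nonempty_iff]
    exact ⟨hF.choose, hF.choose_spec⟩
  have hextne : (Set.extremePoints ℝ Y).Nonempty := by
    by_contra h
    rw [Set.not_nonempty_iff_eq_empty] at h
    rw [hYeq, h, convexHull_empty] at hYne
    exact Set.not_nonempty_empty hYne
  have hn0 : (Set.extremePoints ℝ Y).ncard ≠ 0 := by
    intro h0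
    rw [Set.ncard_eq_zero hYfin] at h0
    rw [h0] at hextne
    exact Set.not_nonempty_empty hextne
  obtain ⟨c, e, hYseg⟩ : ∃ c e : EuclideanSpace ℝ (Fin n), Y = segment ℝ c e := by
    have h12 : (Set.extremePoints ℝ Y).ncard = 1 ∨ (Set.extremePoints ℝ Y).ncard = 2 := by omega
    rcases h12 with h | h
    · obtain ⟨x, hx⟩ := Set.ncard_eq_one.mp h
      exact ⟨x, x, by rw [hYeq, hx, convexHull_singleton, segment_same]⟩
    · obtain ⟨x, y, _, hxy⟩ := Set.ncard_eq_two.mp h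
      exact ⟨x, y, by rw [hYeq, hxy, convexHull_pair]⟩
  rw [hYseg, hXseg, hseg]
  apply hdet
  intro d hd
  have := hsupp d hd
  rw [hYseg, hXseg, hseg, supp_segment, supp_segment] at this
  exact this
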